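/- Let f = a_0 + a_1 x + ... + a_n x^n ∈ ℤ[x] with a_0 = ± p_1^{k_1} ⋯ p_r^{k_r}, where r ≥ 2, the p_i are distinct primes, and the k_i are positive integers. Suppose for each i = 1, ..., r there exists a positive integer j_i ≤ n with (i) p_i ∤ a_{j_i}, (ii) k_i/j_i < v_{p_i}(a_t)/(j_i - t) for each t = 1, ..., j_i - 1 with a_t ≠ 0, and (iii) gcd(k_i, j_i) = 1. If every complex zero θ of f satisfies |θ| > 1, then f is a product of at most r irreducible factors in ℤ[x]. -/

import Mathlib

open Polynomial
open scoped Classical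

/-- If `p^V ∣ z`, `¬ p^(V+1) ∣ z` then `padicValInt p z = V`. -/
lemma padicValInt_eq_of_dvd_not_dvd {p : ℕ} (hp : p.Prime) {z : ℤ} {V : ℕ}
    (h1 : (p : ℤ) ^ V ∣ z) (h2 : ¬ (p : ℤ) ^ (V + 1) ∣ z) : padicValInt p z = V := by
  haveI : Fact p.Prime := ⟨hp⟩
  have hz : z ≠ 0 := by rintro rfl; exact h2 (dvd_zero _)
  have hle : V ≤ padicValInt p z := ((padicValInt_dvd_iff V z).1 h1).resolve_left hz
  have hlt : ¬ (V + 1 ≤ padicValInt p z) := fun h =>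
    h2 ((padicValInt_dvd_iff (V + 1) z).2 (Or.inr h))
  omega

/-- Gauss-valuation lemma: minimizers of the weighted valuation survive multiplication. -/
lemma gauss_min (p : ℕ) (hp : p.Prime) (J K : ℕ) (hJ : 1 ≤ J)
    (g h : Polynomial ℤ) (hg : g ≠ 0) (hh : h ≠ 0) :
    ∃ s t, g.coeff s ≠ 0 ∧ h.coeff t ≠ 0 ∧ (g * h).coeff (s + t) ≠ 0 ∧
      padicValInt p ((g * h).coeff (s + t))
        = padicValInt p (g.coeff s) + padicValInt p (h.coeff t) ∧
      (∀ s', g.coeff s' ≠ 0 →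
        J * padicValInt p (g.coeff s) + K * s ≤ J * padicValInt p (g.coeff s') + K * s') ∧
      (∀ t', h.coeff t' ≠ 0 →
        J * padicValInt p (h.coeff t) + K * t ≤ J * padicValInt p (h.coeff t') + K * t') := by
  haveI : Fact p.Prime := ⟨hp⟩
  set μg : ℕ → ℕ := fun s => J * padicValInt p (g.coeff s) + K * s with hμg
  set μh : ℕ → ℕ := fun t => J * padicValInt p (h.coeff t) + K * t with hμh
  have hgs : g.support.Nonempty := Polynomial.nonempty_support_iff.2 hg
  have hhs : h.support.Nonempty := Polynomial.nonempty_support_iff.2 hh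
  -- minimal values
  have hgimg : (g.support.image μg).Nonempty := hgs.image _
  have hhimg : (h.support.image μh).Nonempty := hhs.image _
  set Mg := (g.support.image μg).min' hgimg with hMg
  set Mh := (h.support.image μh).min' hhimg with hMh
  have hAg : (g.support.filter (fun s => μg s = Mg)).Nonempty := by
    obtain ⟨s, hs, hse⟩ := Finset.mem_image.1 ((g.support.image μg).min'_mem hgimg)
    exact ⟨s, Finset.mem_filter.2 ⟨hs, hse⟩⟩
  have hAh : (h.support.filter (fun t => μh t = Mh)).Nonempty := by
    obtain ⟨t, ht, hte⟩ := Finset.mem_image.1 ((h.support.image μh).min'_mem hhimg)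
    exact ⟨t, Finset.mem_filter.2 ⟨ht, hte⟩⟩
  set s0 := (g.support.filter (fun s => μg s = Mg)).min' hAg with hs0def
  set t0 := (h.support.filter (fun t => μh t = Mh)).min' hAh with ht0def
  have hs0mem := Finset.mem_filter.1 ((g.support.filter (fun s => μg s = Mg)).min'_mem hAg)
  have ht0mem := Finset.mem_filter.1 ((h.support.filter (fun t => μh t = Mh)).min'_mem hAh)
  have hbs0 : g.coeff s0 ≠ 0 := Polynomial.mem_support_iff.1 hs0mem.1
  have hct0 : h.coeff t0 ≠ 0 := Polynomial.mem_support_iff.1 ht0mem.1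
  have hminG : ∀ s', g.coeff s' ≠ 0 → μg s0 ≤ μg s' := by
    intro s' hs'
    rw [hs0mem.2]
    exact Finset.min'_le _ _ (Finset.mem_image_of_mem μg (Polynomial.mem_support_iff.2 hs'))
  have hminH : ∀ t', h.coeff t' ≠ 0 → μh t0 ≤ μh t' := by
    intro t' ht'
    rw [ht0mem.2]
    exact Finset.min'_le _ _ (Finset.mem_image_of_mem μh (Polynomial.mem_support_iff.2 ht'))
  -- strictness below s0
  have hstrictG : ∀ s', s' < s0 → g.coeff s' ≠ 0 → μg s0 < μg s' := by
    intro s' hlt hs'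
    rcases lt_or_eq_of_le (hminG s' hs') with h' | h'
    · exact h'
    · exfalso
      have : s' ∈ g.support.filter (fun s => μg s = Mg) :=
        Finset.mem_filter.2 ⟨Polynomial.mem_support_iff.2 hs', by rw [← h', hs0mem.2]⟩
      exact absurd (Finset.min'_le _ _ this) (not_le.2 hlt)
  have hstrictH : ∀ t', t' < t0 → h.coeff t' ≠ 0 → μh t0 < μh t' := by
    intro t' hlt ht'
    rcases lt_or_eq_of_le (hminH t' ht') with h' | h'
    · exact h'
    · exfalso
      have : t' ∈ h.support.filter (fun t => μh t = Mh) :=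
        Finset.mem_filter.2 ⟨Polynomial.mem_support_iff.2 ht', by rw [← h', ht0mem.2]⟩
      exact absurd (Finset.min'_le _ _ this) (not_le.2 hlt)
  refine ⟨s0, t0, hbs0, hct0, ?_⟩
  set V := padicValInt p (g.coeff s0) + padicValInt p (h.coeff t0) with hV
  -- every cross term is divisible by p^(V+1)
  have hcross : ∀ x ∈ Finset.HasAntidiagonal.antidiagonal (s0 + t0), x ≠ (s0, t0) →
      (p : ℤ) ^ (V + 1) ∣ g.coeff x.1 * h.coeff x.2 := by
    rintro ⟨s, t⟩ hx hne
    have hst : s + t = s0 + t0 := Finset.HasAntidiagonal.mem_antidiagonal.1 hx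
    by_cases hb : g.coeff s = 0
    · simp [hb]
    by_cases hc : h.coeff t = 0
    · simp [hc]
    have hkey : V + 1 ≤ padicValInt p (g.coeff s) + padicValInt p (h.coeff t) := by
      have hsne : s ≠ s0 := by
        rintro rfl
        exact hne (by simp [Prod.ext_iff]; omega)
      set vb := padicValInt p (g.coeff s) with hvb
      set vc := padicValInt p (h.coeff t) with hvc
      set vb0 := padicValInt p (g.coeff s0) with hvb0
      set vc0 := padicValInt p (h.coeff t0) with hvc0
      have e4 : K * s + K * t = K * s0 + K * t0 := by
        rw [← Nat.mul_add, ← Nat.mul_add, hst]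
      have hJmul : J * (vb0 + vc0) < J * (vb + vc) := by
        have e1 : J * (vb + vc) = J * vb + J * vc := Nat.mul_add _ _ _
        have e2 : J * (vb0 + vc0) = J * vb0 + J * vc0 := Nat.mul_add _ _ _
        rcases lt_or_gt_of_ne hsne with hlt | hgt
        · have h1 := hstrictG s hlt hb
          have h2 := hminH t hc
          simp only [hμg, hμh, ← hvb, ← hvc, ← hvb0, ← hvc0] at h1 h2
          omega
        · have htlt : t < t0 := by omega
          have h1 := hminG s hb
          have h2 := hstrictH t htlt hc
          simp only [hμg, hμh, ← hvb, ← hvc, ← hvb0, ← hvc0] at h1 h2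
          omega
      have : vb0 + vc0 < vb + vc := Nat.lt_of_mul_lt_mul_left hJmul
      simp only [hV]
      omega
    refine dvd_trans (pow_dvd_pow _ hkey) ?_
    rw [pow_add]
    exact mul_dvd_mul (padicValInt_dvd _) (padicValInt_dvd _)
  -- the coefficient as main term + rest
  have hmain_ne : g.coeff s0 * h.coeff t0 ≠ 0 := mul_ne_zero hbs0 hct0
  have hmainval : padicValInt p (g.coeff s0 * h.coeff t0) = V := padicValInt.mul hbs0 hct0
  have hmain_not : ¬ (p : ℤ) ^ (V + 1) ∣ g.coeff s0 * h.coeff t0 := by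
    intro hdvd
    rcases (padicValInt_dvd_iff (V + 1) _).1 hdvd with h' | h'
    · exact hmain_ne h'
    · omega
  have hcoeff : (g * h).coeff (s0 + t0)
      = g.coeff s0 * h.coeff t0
        + ∑ x ∈ (Finset.HasAntidiagonal.antidiagonal (s0 + t0)).erase (s0, t0), g.coeff x.1 * h.coeff x.2 := by
    have hmem : ((s0, t0) : ℕ × ℕ) ∈ Finset.HasAntidiagonal.antidiagonal (s0 + t0) :=
      Finset.HasAntidiagonal.mem_antidiagonal.2 rfl
    rw [Polynomial.coeff_mul]
    exact (Finset.add_sum_erase _ (fun x => g.coeff x.1 * h.coeff x.2) hmem).symm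
  have hrest : (p : ℤ) ^ (V + 1) ∣
      ∑ x ∈ (Finset.HasAntidiagonal.antidiagonal (s0 + t0)).erase (s0, t0), g.coeff x.1 * h.coeff x.2 :=
    Finset.dvd_sum (fun x (hx : x ∈ (Finset.HasAntidiagonal.antidiagonal (s0 + t0)).erase (s0, t0)) =>
      hcross x (Finset.mem_of_mem_erase hx) (Finset.ne_of_mem_erase hx))
  have hVdvd : (p : ℤ) ^ V ∣ (g * h).coeff (s0 + t0) := by
    rw [hcoeff]
    exact dvd_add (by rw [← hmainval]; exact padicValInt_dvd _)
      (dvd_trans (pow_dvd_pow _ (Nat.le_succ V)) hrest)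
  have hVnotdvd : ¬ (p : ℤ) ^ (V + 1) ∣ (g * h).coeff (s0 + t0) := by
    intro hdvd
    apply hmain_not
    have : g.coeff s0 * h.coeff t0 = (g * h).coeff (s0 + t0)
        - ∑ x ∈ (Finset.HasAntidiagonal.antidiagonal (s0 + t0)).erase (s0, t0), g.coeff x.1 * h.coeff x.2 := by
      rw [hcoeff]; ring
    rw [this]
    exact dvd_sub hdvd hrest
  have hne0 : (g * h).coeff (s0 + t0) ≠ 0 := by
    intro h0; rw [h0] at hVnotdvd; exact hVnotdvd (dvd_zero _)
  exact ⟨hne0, padicValInt_eq_of_dvd_not_dvd hp hVdvd hVnotdvd, hminG, hminH⟩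

/-- Key lemma: under the Newton-polygon conditions at prime `p`, in any factorization
`f = G * H` the prime `p` cannot divide both constant terms. -/
lemma not_both_dvd (p K J : ℕ) (hp : p.Prime) (hK : 1 ≤ K) (hJ : 1 ≤ J)
    (hgcd : Nat.gcd K J = 1) (f G H : Polynomial ℤ) (hf : f = G * H)
    (hG0 : G.coeff 0 ≠ 0) (hH0 : H.coeff 0 ≠ 0)
    (hvK : padicValInt p (f.coeff 0) = K)
    (hJc : ¬ (p : ℤ) ∣ f.coeff J)
    (hmid : ∀ t, 1 ≤ t → t < J → f.coeff t ≠ 0 →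
      K * (J - t) < padicValInt p (f.coeff t) * J)
    (hGp : (p : ℤ) ∣ G.coeff 0) (hHp : (p : ℤ) ∣ H.coeff 0) : False := by
  haveI : Fact p.Prime := ⟨hp⟩
  set a := padicValInt p (G.coeff 0) with ha
  set b := padicValInt p (H.coeff 0) with hb
  have ha1 : 1 ≤ a := by
    have := (padicValInt_dvd_iff 1 (G.coeff 0)).1 (by simpa using hGp)
    rcases this with h' | h'
    · exact absurd h' hG0
    · exact h'
  have hb1 : 1 ≤ b := by
    have := (padicValInt_dvd_iff 1 (H.coeff 0)).1 (by simpa using hHp)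
    rcases this with h' | h'
    · exact absurd h' hH0
    · exact h'
  have habK : a + b = K := by
    rw [← hvK, hf, Polynomial.mul_coeff_zero, padicValInt.mul hG0 hH0]
  have hf0 : f.coeff 0 ≠ 0 := by
    rw [hf, Polynomial.mul_coeff_zero]; exact mul_ne_zero hG0 hH0
  have hG : G ≠ 0 := fun h => hG0 (by simp [h])
  have hH : H ≠ 0 := fun h => hH0 (by simp [h])
  -- lower bound on weighted valuation of f's coefficients
  have L3 : ∀ m, f.coeff m ≠ 0 → K * J ≤ J * padicValInt p (f.coeff m) + K * m := by
    intro m hm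
    rcases Nat.lt_or_ge m J with hmJ | hmJ
    · rcases Nat.eq_zero_or_pos m with rfl | hm1
      · rw [hvK, Nat.mul_comm K J, Nat.mul_zero, Nat.add_zero]
      · have hm' := hmid m hm1 hmJ hm
        have e : K * (J - m) + K * m = K * J := by
          rw [← Nat.mul_add, Nat.sub_add_cancel (le_of_lt hmJ)]
        have e2 : padicValInt p (f.coeff m) * J = J * padicValInt p (f.coeff m) :=
          Nat.mul_comm _ _
        linarith [hm', e, e2]
    · have h' : K * J ≤ K * m := Nat.mul_le_mul_left K hmJ
      linarith [h', Nat.zero_le (J * padicValInt p (f.coeff m))]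
  obtain ⟨s0, t0, hbs0, hct0, hfne, hval, hminG, hminH⟩ :=
    gauss_min p hp J K hJ G H hG hH
  have hL := L3 (s0 + t0) (by rw [hf]; exact hfne)
  rw [hf, hval] at hL
  have hG0le := hminG 0 hG0
  have hH0le := hminH 0 hH0
  simp only [Nat.mul_zero, Nat.add_zero, ← ha, ← hb] at hG0le hH0le
  -- derive: the min value of μ_G is J * a, of μ_H is J * b
  have hKab : K * J = J * a + J * b := by
    rw [← habK]; ring
  have hMG : J * padicValInt p (G.coeff s0) + K * s0 = J * a := by
    have expand : J * (padicValInt p (G.coeff s0) + padicValInt p (H.coeff t0))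
        + K * (s0 + t0)
        = (J * padicValInt p (G.coeff s0) + K * s0)
          + (J * padicValInt p (H.coeff t0) + K * t0) := by ring
    linarith [hL, hG0le, hH0le, hKab, expand]
  have hMH : J * padicValInt p (H.coeff t0) + K * t0 = J * b := by
    have expand : J * (padicValInt p (G.coeff s0) + padicValInt p (H.coeff t0))
        + K * (s0 + t0)
        = (J * padicValInt p (G.coeff s0) + K * s0)
          + (J * padicValInt p (H.coeff t0) + K * t0) := by ring
    linarith [hL, hG0le, hH0le, hKab, expand]
  have hboundG : ∀ s, G.coeff s ≠ 0 → J * a ≤ J * padicValInt p (G.coeff s) + K * s := by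
    intro s hs; rw [← hMG]; exact hminG s hs
  have hboundH : ∀ t, H.coeff t ≠ 0 → J * b ≤ J * padicValInt p (H.coeff t) + K * t := by
    intro t ht; rw [← hMH]; exact hminH t ht
  -- final contradiction at coefficient J
  apply hJc
  rw [hf, Polynomial.coeff_mul]
  refine Finset.dvd_sum ?_
  rintro ⟨s, t⟩ hx
  have hst : s + t = J := Finset.HasAntidiagonal.mem_antidiagonal.1 hx
  by_cases hgs : G.coeff s = 0
  · simp [hgs]
  by_cases hht : H.coeff t = 0
  · simp [hht]
  have h1 := hboundG s hgs
  have h2 := hboundH t hht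
  have hpos : 1 ≤ padicValInt p (G.coeff s) + padicValInt p (H.coeff t) := by
    by_contra hcon
    push_neg at hcon
    have hvs : padicValInt p (G.coeff s) = 0 := by omega
    have hvt : padicValInt p (H.coeff t) = 0 := by omega
    rw [hvs] at h1; rw [hvt] at h2
    simp only [Nat.mul_zero, Nat.zero_add] at h1 h2
    have e : K * s + K * t = K * J := by rw [← Nat.mul_add, hst]
    have hKsJa : K * s = J * a := by linarith [h1, h2, e, hKab]
    have hKtJb : K * t = J * b := by linarith [h1, h2, e, hKab]
    have hJdvd : J ∣ s := by
      have hcop : Nat.Coprime J K := Nat.Coprime.symm hgcd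
      exact hcop.dvd_of_dvd_mul_left ⟨a, hKsJa⟩
    have hsJ : s ≤ J := by omega
    rcases Nat.lt_or_ge s J with hlt | hge
    · have hs0 : s = 0 := Nat.eq_zero_of_dvd_of_lt hJdvd hlt
      rw [hs0, Nat.mul_zero] at hKsJa
      rcases Nat.mul_eq_zero.1 hKsJa.symm with h' | h' <;> omega
    · have hsJ' : s = J := le_antisymm hsJ hge
      have ht0 : t = 0 := by omega
      rw [ht0, Nat.mul_zero] at hKtJb
      rcases Nat.mul_eq_zero.1 hKtJb.symm with h' | h' <;> omega
  have : (p : ℤ) ∣ G.coeff s * H.coeff t := by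
    refine dvd_trans ?_ (dvd_trans (pow_dvd_pow (p : ℤ) hpos) ?_)
    · simp
    · rw [pow_add]
      exact mul_dvd_mul (padicValInt_dvd _) (padicValInt_dvd _)
  exact this

lemma multiset_card_finset_sum {ι α : Type*} (u : Finset ι) (F : ι → Multiset α) :
    Multiset.card (∑ i ∈ u, F i) = ∑ i ∈ u, Multiset.card (F i) := by
  classical
  induction u using Finset.induction with
  | empty => simp
  | insert a u' hni ih => rw [Finset.sum_insert hni, Finset.sum_insert hni,
      Multiset.card_add, ih]

lemma padicValInt_neg (p : ℕ) (z : ℤ) : padicValInt p (-z) = padicValInt p z := by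
  simp [padicValInt]

lemma val_prod_pow (r : ℕ) (p : Fin r → ℕ) (hp : ∀ i, (p i).Prime)
    (hdist : Function.Injective p) (k : Fin r → ℕ) (i0 : Fin r) :
    padicValInt (p i0) (∏ i, ((p i : ℤ)) ^ (k i)) = k i0 := by
  have hcast : (∏ i, ((p i : ℤ)) ^ (k i)) = ((∏ i, (p i) ^ (k i) : ℕ) : ℤ) := by
    push_cast; rfl
  rw [hcast, padicValInt.of_nat, ← Nat.factorization_def _ (hp i0),
    Nat.factorization_prod (fun i _ => pow_ne_zero _ (hp i).pos.ne'),
    Finsupp.finset_sum_apply]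
  have hterm : ∀ i : Fin r, ((p i) ^ (k i)).factorization (p i0)
      = if i = i0 then k i0 else 0 := by
    intro i
    rw [(hp i).factorization_pow, Finsupp.single_apply]
    by_cases h : i = i0
    · subst h; simp
    · have : p i ≠ p i0 := fun he => h (hdist he)
      simp [this, h]
  rw [Finset.sum_congr rfl (fun i _ => hterm i)]
  simp

/-- A nonconstant divisor of a polynomial all of whose complex roots have modulus `> 1`
has constant coefficient of absolute value at least 2. -/
lemma one_le_multiset_prod_real (s : Multiset ℝ) (h : ∀ x ∈ s, 1 ≤ x) : 1 ≤ s.prod := by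
  induction s using Multiset.induction with
  | empty => simp
  | cons a t ih =>
    rw [Multiset.prod_cons]
    have ha : 1 ≤ a := h a (Multiset.mem_cons_self a t)
    have ht : 1 ≤ t.prod := ih (fun x hx => h x (Multiset.mem_cons_of_mem hx))
    nlinarith

lemma two_le_natAbs_coeff_zero (f g : Polynomial ℤ) (hgf : g ∣ f) (hf0 : f.coeff 0 ≠ 0)
    (hdeg : 0 < g.natDegree)
    (hroots : ∀ θ : ℂ, Polynomial.aeval θ f = 0 → 1 < ‖θ‖) :
    2 ≤ (g.coeff 0).natAbs := by
  have hf : f ≠ 0 := fun h => hf0 (by simp [h])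
  have hg : g ≠ 0 := fun h => hf (by
    obtain ⟨c, hc⟩ := hgf; rw [hc, h, zero_mul])
  set G : Polynomial ℂ := g.map (Int.castRingHom ℂ) with hG
  have hinj : Function.Injective ⇑(Int.castRingHom ℂ) := (Int.castRingHom ℂ).injective_int
  have hGne : G ≠ 0 := by
    intro h
    apply hg
    apply Polynomial.map_injective _ hinj
    rw [Polynomial.map_zero, ← hG]
    exact h
  have hGdeg : G.natDegree = g.natDegree := Polynomial.natDegree_map_eq_of_injective hinj g
  have hsplit : Splits G := IsAlgClosed.splits G
  have hcard : Multiset.card G.roots = G.natDegree :=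
    (Polynomial.splits_iff_card_roots).1 hsplit
  -- each root of G is a root of f
  have hroot_big : ∀ a ∈ G.roots, 1 < ‖a‖ := by
    intro a haroot
    have hGa : G.eval a = 0 := (Polynomial.isRoot_of_mem_roots haroot)
    have : Polynomial.aeval a g = 0 := by
      rwa [Polynomial.aeval_def, ← Polynomial.eval_map]
    have hfa : Polynomial.aeval a f = 0 := by
      obtain ⟨c, hc⟩ := hgf
      rw [hc, map_mul, this, zero_mul]
    exact hroots a hfa
  -- compute |G.eval 0|
  have hGfact := hsplit.eq_prod_roots
  have heval : G.eval 0 = G.leadingCoeff * ((G.roots.map (fun a => -a)).prod) := by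
    conv_lhs => rw [hGfact]
    rw [Polynomial.eval_mul, Polynomial.eval_C, Polynomial.eval_multiset_prod,
      Multiset.map_map]
    congr 2
    apply Multiset.map_congr rfl
    intro a _
    simp
  have habs : ‖(G.eval 0)‖
      = ‖G.leadingCoeff‖ * ((G.roots.map (fun a => ‖a‖)).prod) := by
    rw [heval, norm_mul, show ‖(G.roots.map (fun a => -a)).prod‖ = normHom (G.roots.map (fun a => -a)).prod from rfl,
      map_multiset_prod, Multiset.map_map]
    congr 2
    apply Multiset.map_congr rfl
    intro a _
    simp
  -- the product of moduli is > 1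
  have hmem : ∃ a, a ∈ G.roots := by
    rw [← Multiset.card_pos_iff_exists_mem, hcard, hGdeg]; exact hdeg
  obtain ⟨a0, ha0⟩ := hmem
  have hprod1 : 1 < (G.roots.map (fun a => ‖a‖)).prod := by
    have hcons : a0 ::ₘ G.roots.erase a0 = G.roots := Multiset.cons_erase ha0
    rw [← hcons, Multiset.map_cons, Multiset.prod_cons]
    have hrest : 1 ≤ ((G.roots.erase a0).map (fun a => ‖a‖)).prod := by
      apply one_le_multiset_prod_real
      intro x hx
      obtain ⟨a, ha, rfl⟩ := Multiset.mem_map.1 hx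
      exact le_of_lt (hroot_big a (Multiset.mem_of_mem_erase ha))
    have ha0big := hroot_big a0 ha0
    nlinarith
  have hlc : 1 ≤ ‖G.leadingCoeff‖ := by
    have hlcmap : G.leadingCoeff = ((g.leadingCoeff : ℤ) : ℂ) := by
      rw [hG, Polynomial.leadingCoeff_map_of_injective hinj]; rfl
    rw [hlcmap, Complex.norm_intCast]
    have : (1 : ℤ) ≤ |g.leadingCoeff| := Int.one_le_abs (Polynomial.leadingCoeff_ne_zero.2 hg)
    exact_mod_cast (by exact_mod_cast this : (1:ℝ) ≤ ((|g.leadingCoeff| : ℤ) : ℝ))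
  have hbig : 1 < ‖(G.eval 0)‖ := by
    rw [habs]
    calc (1:ℝ) = 1 * 1 := by ring
      _ < ‖G.leadingCoeff‖ * (G.roots.map (fun a => ‖a‖)).prod := by
          apply mul_lt_mul' hlc hprod1 (by norm_num)
          exact lt_of_lt_of_le (by norm_num) hlc
  have heval0 : G.eval 0 = ((g.coeff 0 : ℤ) : ℂ) := by
    rw [hG, Polynomial.eval_map, Polynomial.eval₂_at_zero]
    rfl
  rw [heval0, Complex.norm_intCast] at hbig
  have : (1 : ℤ) < |g.coeff 0| := by exact_mod_cast hbig
  rw [Int.abs_eq_natAbs] at this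
  exact_mod_cast this

/-- Theorem 5 of the paper: f is a product of at most r irreducible factors in ℤ[x]. -/
theorem at_most_r_irreducible_factors (r : ℕ) (hr : 2 ≤ r)
    (p : Fin r → ℕ) (hp : ∀ i, (p i).Prime) (hdist : Function.Injective p)
    (k : Fin r → ℕ) (hk : ∀ i, 1 ≤ k i)
    (f : Polynomial ℤ) (n : ℕ) (hn : f.natDegree = n)
    (ha0 : f.coeff 0 = (∏ i, ((p i : ℤ)) ^ (k i)) ∨
           f.coeff 0 = -(∏ i, ((p i : ℤ)) ^ (k i)))
    (j : Fin r → ℕ) (hj1 : ∀ i, 1 ≤ j i) (hjn : ∀ i, j i ≤ n)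
    (h1 : ∀ i, ¬ ((p i : ℤ)) ∣ f.coeff (j i))
    (h2 : ∀ i, ∀ t, 1 ≤ t → t < j i → f.coeff t ≠ 0 →
      k i * (j i - t) < padicValInt (p i) (f.coeff t) * (j i))
    (h3 : ∀ i, Nat.gcd (k i) (j i) = 1)
    (hroots : ∀ θ : ℂ, Polynomial.aeval θ f = 0 → 1 < ‖θ‖) :
    ∀ s : Multiset (Polynomial ℤ), (∀ g ∈ s, Irreducible g) → f = s.prod →
      Multiset.card (s.filter fun g => 0 < g.natDegree) ≤ r := by
  intro s hirr hprod
  set N : ℤ := ∏ i, ((p i : ℤ)) ^ (k i) with hN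
  have hNpos : 0 < N := Finset.prod_pos (fun i _ => pow_pos (by exact_mod_cast (hp i).pos) _)
  have hf0 : f.coeff 0 ≠ 0 := by
    rcases ha0 with h | h <;> rw [h] <;> [exact hNpos.ne'; exact neg_ne_zero.2 hNpos.ne']
  have hf : f ≠ 0 := fun h => hf0 (by simp [h])
  have hvK : ∀ i, padicValInt (p i) (f.coeff 0) = k i := by
    intro i
    rcases ha0 with h | h
    · rw [h]; exact val_prod_pow r p hp hdist k i
    · rw [h, padicValInt_neg]; exact val_prod_pow r p hp hdist k i
  -- at most one member of s has constant coefficient divisible by p i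
  have huniq : ∀ i, Multiset.card (s.filter (fun g => (p i : ℤ) ∣ g.coeff 0)) ≤ 1 := by
    intro i
    by_contra hcon
    push_neg at hcon
    set t := s.filter (fun g => (p i : ℤ) ∣ g.coeff 0) with ht
    obtain ⟨g, hg⟩ := Multiset.card_pos_iff_exists_mem.1
      (show 0 < Multiset.card t by omega)
    obtain ⟨t', ht'⟩ := Multiset.exists_cons_of_mem hg
    have hcard' : 0 < Multiset.card t' := by
      rw [ht'] at hcon; simp only [Multiset.card_cons] at hcon; omega
    obtain ⟨h0, hh0⟩ := Multiset.card_pos_iff_exists_mem.1 hcard'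
    obtain ⟨t'', ht''⟩ := Multiset.exists_cons_of_mem hh0
    have hts : t ≤ s := Multiset.filter_le _ s
    obtain ⟨w, hw⟩ := Multiset.le_iff_exists_add.1 hts
    have hsdecomp : s = g ::ₘ h0 ::ₘ (t'' + w) := by
      rw [hw, ht', ht'']; rw [Multiset.cons_add, Multiset.cons_add]
    set G : Polynomial ℤ := g with hGdef
    set H : Polynomial ℤ := h0 * (t'' + w).prod with hHdef
    have hfGH : f = G * H := by
      rw [hprod, hsdecomp, Multiset.prod_cons, Multiset.prod_cons, hGdef, hHdef]
    have hGH0 : G.coeff 0 * H.coeff 0 = f.coeff 0 := by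
      rw [hfGH]; exact (Polynomial.mul_coeff_zero G H).symm
    have hG0 : G.coeff 0 ≠ 0 := fun h => hf0 (by rw [← hGH0, h, zero_mul])
    have hH0 : H.coeff 0 ≠ 0 := fun h => hf0 (by rw [← hGH0, h, mul_zero])
    have hgmem : g ∈ t := hg
    have hh0mem : h0 ∈ t := by rw [ht']; exact Multiset.mem_cons_of_mem hh0
    have hgp : (p i : ℤ) ∣ G.coeff 0 := (Multiset.mem_filter.1 hgmem).2
    have hh0p : (p i : ℤ) ∣ h0.coeff 0 := (Multiset.mem_filter.1 hh0mem).2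
    have hHp : (p i : ℤ) ∣ H.coeff 0 := by
      rw [hHdef, Polynomial.mul_coeff_zero]
      exact dvd_mul_of_dvd_left hh0p _
    exact not_both_dvd (p i) (k i) (j i) (hp i) (hk i) (hj1 i) (h3 i) f G H hfGH
      hG0 hH0 (hvK i) (h1 i) (h2 i) hgp hHp
  -- every nonconstant factor has a prime p i dividing its constant coefficient
  set T := s.filter (fun g => 0 < g.natDegree) with hT
  have hcover : ∀ g ∈ T, ∃ i, (p i : ℤ) ∣ g.coeff 0 := by
    intro g hgT
    have hgs : g ∈ s := Multiset.mem_of_mem_filter hgT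
    have hgdeg : 0 < g.natDegree := (Multiset.mem_filter.1 hgT).2
    have hgdvd : g ∣ f := by rw [hprod]; exact Multiset.dvd_prod hgs
    have h2le : 2 ≤ (g.coeff 0).natAbs :=
      two_le_natAbs_coeff_zero f g hgdvd hf0 hgdeg hroots
    obtain ⟨q, hq, hqdvd⟩ := Nat.exists_prime_and_dvd (by omega : (g.coeff 0).natAbs ≠ 1)
    have hdvdf : (g.coeff 0).natAbs ∣ (f.coeff 0).natAbs :=
      Int.natAbs_dvd_natAbs.2 (by
        obtain ⟨c, hc⟩ := hgdvd
        exact ⟨c.coeff 0, by rw [hc, Polynomial.mul_coeff_zero]⟩)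
    have hfnatabs : (f.coeff 0).natAbs = ∏ i, (p i) ^ (k i) := by
      have hcast : N = ((∏ i, (p i) ^ (k i) : ℕ) : ℤ) := by rw [hN]; push_cast; rfl
      rcases ha0 with h | h
      · rw [h, hcast, Int.natAbs_natCast]
      · rw [h, Int.natAbs_neg, hcast, Int.natAbs_natCast]
    have hqprod : q ∣ ∏ i, (p i) ^ (k i) := by
      rw [← hfnatabs]; exact hqdvd.trans hdvdf
    obtain ⟨i, _, hqdvd'⟩ := (Nat.Prime.prime hq).exists_mem_finset_dvd hqprod
    have hqpi : q = p i := (Nat.prime_dvd_prime_iff_eq hq (hp i)).1 (hq.dvd_of_dvd_pow hqdvd')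
    refine ⟨i, ?_⟩
    rw [← hqpi]
    refine Int.natAbs_dvd_natAbs.1 ?_
    rwa [Int.natAbs_natCast]
  -- counting
  have hTle : T ≤ ∑ i : Fin r, T.filter (fun g => (p i : ℤ) ∣ g.coeff 0) := by
    rw [Multiset.le_iff_count]
    intro g
    rw [Multiset.count_sum']
    by_cases hgT : g ∈ T
    · obtain ⟨i0, hi0⟩ := hcover g hgT
      have hstep : Multiset.count g (T.filter (fun g => (p i0 : ℤ) ∣ g.coeff 0))
          = Multiset.count g T := by
        rw [Multiset.count_filter, if_pos hi0]
      rw [← hstep]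
      exact Finset.single_le_sum
        (f := fun i => Multiset.count g (T.filter (fun g => (p i : ℤ) ∣ g.coeff 0)))
        (fun i _ => Nat.zero_le _) (Finset.mem_univ i0)
    · simp [Multiset.count_eq_zero_of_notMem hgT]
  calc Multiset.card T
      ≤ Multiset.card (∑ i : Fin r, T.filter (fun g => (p i : ℤ) ∣ g.coeff 0)) :=
        Multiset.card_le_card hTle
    _ = ∑ i : Fin r, Multiset.card (T.filter (fun g => (p i : ℤ) ∣ g.coeff 0)) :=
        multiset_card_finset_sum _ _
    _ ≤ ∑ i : Fin r, 1 := by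
        refine Finset.sum_le_sum ?_
        intro i _
        refine le_trans (Multiset.card_le_card
          (Multiset.filter_le_filter _ (Multiset.filter_le _ s))) (huniq i)
    _ = r := by simp
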